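/- A set A ⊆ ω^ω belongs to fN(Fin) if and only if there exists h : ℕ → ℕ with h(n) ≥ 1 for all n and limsup_n h(n) = ∞ such that A ∈ fN(h); that is, fN(Fin) = ⋃ { fN(h) : h : ℕ → ℕ, h(n) ≥ 1 for all n, limsup_n h(n) = ∞ }. -/

import Mathlib

open Filter Set

/-- The basic clopen set `[σ]` in the Baire space determined by a finite sequence `σ`. -/
def cylinder (σ : List ℕ) : Set (ℕ → ℕ) :=
  {x | ∀ i : Fin σ.length, x i = σ.get i}

/-- `limsup_n h(n) = ∞`, i.e. `h` takes arbitrarily large values frequently. -/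
def LimsupInfty (h : ℕ → ℕ) : Prop :=
  ∀ m : ℕ, ∃ᶠ n in Filter.atTop, m ≤ h n

/-- The family `fN(h)` of fake null sets: `F ∈ fN(h)` iff for every `ε > 0` there is a
sequence of finite sequences `σ_n` with `∑ 1/h(|σ_n|) < ε` covering `F`. -/
def fN (h : ℕ → ℕ) (F : Set (ℕ → ℕ)) : Prop :=
  ∀ ε : ℝ, 0 < ε →
    ∃ σ : ℕ → List ℕ,
      Summable (fun n => (1 : ℝ) / (h (σ n).length : ℝ)) ∧
      (∑' n, (1 : ℝ) / (h (σ n).length : ℝ)) < ε ∧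
      F ⊆ ⋃ n, cylinder (σ n)

/-- The restriction of `x` to the interval `[l, u)`, extended by `0` elsewhere. -/
def restrIco (x : ℕ → ℕ) (l u : ℕ) : ℕ → ℕ :=
  fun i => if l ≤ i ∧ i < u then x i else 0

/-- `J` is a set of patterns on the interval `[l, u)`: every element vanishes off `[l, u)`. -/
def SuppIco (l u : ℕ) (J : Set (ℕ → ℕ)) : Prop :=
  ∀ σ ∈ J, ∀ i, ¬ (l ≤ i ∧ i < u) → σ i = 0

/-- The family `fE(h)`: partition `ℕ` into consecutive nonempty intervals `I_n = [a n, a (n+1))`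
(`a 0 = 0`, `a` strictly increasing), patterns `J_n ⊆ ω^{I_n}` with `∑ |J_n|/h(|I_n|) < ∞`,
and `F ⊆ {x : x↾I_n ∈ J_n for all but finitely many n}`. -/
def fE (h : ℕ → ℕ) (F : Set (ℕ → ℕ)) : Prop :=
  ∃ a : ℕ → ℕ, a 0 = 0 ∧ StrictMono a ∧
    ∃ J : ℕ → Set (ℕ → ℕ),
      (∀ n, SuppIco (a n) (a (n+1)) (J n)) ∧
      (∀ n, (J n).Finite) ∧
      Summable (fun n => ((J n).ncard : ℝ) / (h (a (n+1) - a n) : ℝ)) ∧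
      F ⊆ {x | ∀ᶠ n in Filter.atTop, restrIco x (a n) (a (n+1)) ∈ J n}

/-- The family `fS(h)` of fake small sets: as `fE(h)` but with
`x↾I_n ∈ J_n` for infinitely many `n`. -/
def fS (h : ℕ → ℕ) (F : Set (ℕ → ℕ)) : Prop :=
  ∃ a : ℕ → ℕ, a 0 = 0 ∧ StrictMono a ∧
    ∃ J : ℕ → Set (ℕ → ℕ),
      (∀ n, SuppIco (a n) (a (n+1)) (J n)) ∧
      (∀ n, (J n).Finite) ∧
      Summable (fun n => ((J n).ncard : ℝ) / (h (a (n+1) - a n) : ℝ)) ∧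
      F ⊆ {x | ∃ᶠ n in Filter.atTop, restrIco x (a n) (a (n+1)) ∈ J n}

/-- The family `fE(Fin)`: as `fE(h)` but one only requires each pattern set `J_n` to be finite. -/
def fEFin (F : Set (ℕ → ℕ)) : Prop :=
  ∃ a : ℕ → ℕ, a 0 = 0 ∧ StrictMono a ∧
    ∃ J : ℕ → Set (ℕ → ℕ),
      (∀ n, SuppIco (a n) (a (n+1)) (J n)) ∧
      (∀ n, (J n).Finite) ∧
      F ⊆ {x | ∀ᶠ n in Filter.atTop, restrIco x (a n) (a (n+1)) ∈ J n}

/-- The family `fS(Fin)`: as `fS(h)` but one only requires each pattern set `J_n` to be finite. -/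
def fSFin (F : Set (ℕ → ℕ)) : Prop :=
  ∃ a : ℕ → ℕ, a 0 = 0 ∧ StrictMono a ∧
    ∃ J : ℕ → Set (ℕ → ℕ),
      (∀ n, SuppIco (a n) (a (n+1)) (J n)) ∧
      (∀ n, (J n).Finite) ∧
      F ⊆ {x | ∃ᶠ n in Filter.atTop, restrIco x (a n) (a (n+1)) ∈ J n}

/-- The family `fN(Fin)`: there are finite `S_n ⊆ ω^n` with
`F ⊆ {x : x↾n ∈ S_n for infinitely many n}`. -/
def fNFin (F : Set (ℕ → ℕ)) : Prop :=
  ∃ S : (n : ℕ) → Set (Fin n → ℕ),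
    (∀ n, (S n).Finite) ∧
    F ⊆ {x | ∃ᶠ n in Filter.atTop, (fun i : Fin n => x i) ∈ S n}

/-- The σ-ideal `M_-`: there are `x_F ∈ ω^ω` and a partition of `ℕ` into consecutive nonempty
intervals `I_n = [a n, a (n+1))` with `F ⊆ {x : x↾I_n ≠ x_F↾I_n for all but finitely many n}`. -/
def Mminus (F : Set (ℕ → ℕ)) : Prop :=
  ∃ xF : ℕ → ℕ, ∃ a : ℕ → ℕ, a 0 = 0 ∧ StrictMono a ∧
    F ⊆ {x | ∀ᶠ n in Filter.atTop, ∃ i, a n ≤ i ∧ i < a (n+1) ∧ x i ≠ xF i}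

lemma mem_cylinder_ofFn {n : ℕ} (f : Fin n → ℕ) (x : ℕ → ℕ)
    (hf : ∀ i : Fin n, x i = f i) : x ∈ cylinder (List.ofFn f) := by
  intro i
  rw [List.get_ofFn]
  have : ((Fin.cast (List.length_ofFn (f := f)) i : Fin n) : ℕ) = (i : ℕ) := rfl
  rw [← this]
  exact hf _

lemma ofFn_eq_of_mem_cylinder {n : ℕ} (σ : List ℕ) (x : ℕ → ℕ)
    (hx : x ∈ cylinder σ) (hl : σ.length = n) :
    List.ofFn (fun i : Fin n => x i) = σ := by
  apply List.ext_get (by simp [hl])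
  intro m h1 h2
  rw [List.get_ofFn]
  exact hx ⟨m, h2⟩

lemma aux_backward (A : Set (ℕ → ℕ)) (h : ℕ → ℕ) (hpos : ∀ n, 1 ≤ h n)
    (hfN : fN h A) : fNFin A := by
  have H : ∀ k : ℕ, ∃ σ : ℕ → List ℕ,
      Summable (fun n => (1 : ℝ) / (h (σ n).length : ℝ)) ∧
      (∑' n, (1 : ℝ) / (h (σ n).length : ℝ)) < (1/2 : ℝ)^k ∧
      A ⊆ ⋃ n, cylinder (σ n) := fun k => hfN _ (by positivity)
  choose σ hsum htsum hcov using H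
  have hhpos : ∀ m : ℕ, (0:ℝ) < (h m : ℝ) := fun m => by
    exact_mod_cast Nat.lt_of_lt_of_le Nat.zero_lt_one (hpos m)
  set f : ℕ × ℕ → ℝ := fun p => 1 / (h (σ p.1 p.2).length : ℝ) with hfdef
  have hf0 : ∀ p, 0 ≤ f p := fun p => by positivity
  have hfsum : Summable f := by
    rw [summable_prod_of_nonneg hf0]
    refine ⟨hsum, ?_⟩
    apply Summable.of_nonneg_of_le (fun k => tsum_nonneg fun n => by positivity)
      (fun k => (htsum k).le) summable_geometric_two
  refine ⟨fun m => {s : Fin m → ℕ | ∃ k n, List.ofFn s = σ k n}, ?_, ?_⟩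
  · intro m
    have hP : {p : ℕ × ℕ | (σ p.1 p.2).length = m}.Finite := by
      have hev : ∀ᶠ p in cofinite, f p < 1 / (h m : ℝ) := by
        have h0 : (0:ℝ) < 1 / (h m : ℝ) := one_div_pos.mpr (hhpos m)
        exact hfsum.tendsto_cofinite_zero.eventually (Iio_mem_nhds h0)
      rw [Filter.eventually_cofinite] at hev
      apply hev.subset
      intro p hp
      simp only [mem_setOf_eq] at hp ⊢
      rw [hfdef]
      simp only [hp]
      exact lt_irrefl _
    have himg : ((fun p : ℕ × ℕ => σ p.1 p.2) '' {p | (σ p.1 p.2).length = m}).Finite :=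
      hP.image _
    apply (himg.preimage (List.ofFn_injective.injOn)).subset
    intro s hs
    obtain ⟨k, n, hkn⟩ := hs
    refine ⟨(k, n), ?_, hkn.symm⟩
    simp only [mem_setOf_eq, ← hkn, List.length_ofFn]
  · intro x hx
    simp only [mem_setOf_eq]
    rw [Filter.frequently_atTop]
    intro M
    set Hb : ℕ := (Finset.range M).sup h + 1 with hHb
    obtain ⟨k, hk⟩ := exists_pow_lt_of_lt_one (show (0:ℝ) < 1 / (Hb : ℝ) by positivity)
      (by norm_num : (1:ℝ)/2 < 1)
    have hxk := hcov k hx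
    rw [Set.mem_iUnion] at hxk
    obtain ⟨n, hn⟩ := hxk
    set m := (σ k n).length with hm
    have hterm : 1 / (h m : ℝ) ≤ ∑' n, (1 : ℝ) / (h (σ k n).length : ℝ) :=
      Summable.le_tsum (hsum k) n (fun j _ => by positivity)
    have hlt : 1 / (h m : ℝ) < (1/2 : ℝ)^k := lt_of_le_of_lt hterm (htsum k)
    have hmM : M ≤ m := by
      by_contra hc
      push_neg at hc
      have h1 : h m ≤ Hb :=
        le_trans (Finset.le_sup (Finset.mem_range.mpr hc)) (Nat.le_succ _)
      have h2 : (1 / (Hb : ℝ)) ≤ 1 / (h m : ℝ) := by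
        apply one_div_le_one_div_of_le (hhpos m)
        exact_mod_cast h1
      linarith
    exact ⟨m, hmM, k, n, ofFn_eq_of_mem_cylinder _ _ hn rfl⟩

theorem stmt13 (A : Set (ℕ → ℕ)) :
    fNFin A ↔ ∃ h : ℕ → ℕ, (∀ n, 1 ≤ h n) ∧ LimsupInfty h ∧ fN h A := by
  constructor
  · rintro ⟨S, hfin, hsub⟩
    set c : ℕ → ℕ := fun n => (S n).ncard with hc
    refine ⟨fun n => 2^(2*n + c n), fun n => Nat.one_le_two_pow, ?_, ?_⟩
    · intro m
      apply Filter.Eventually.frequently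
      filter_upwards [eventually_ge_atTop m] with n hn
      calc m ≤ n := hn
        _ ≤ 2^n := Nat.le_of_lt (Nat.lt_two_pow_self)
        _ ≤ 2^(2*n + c n) := Nat.pow_le_pow_right (by norm_num) (by omega)
    · intro ε hε
      obtain ⟨K, hK⟩ := exists_pow_lt_of_lt_one (show (0:ℝ) < ε/2 by linarith)
        (by norm_num : (1:ℝ)/2 < 1)
      set L : (n : ℕ) → List (Fin n → ℕ) := fun n => (hfin n).toFinset.toList with hL
      have hLlen : ∀ n, (L n).length = c n := fun n => by
        rw [hL]
        simp only [Finset.length_toList]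
        exact ((S n).ncard_eq_toFinset_card (hfin n)).symm
      set σ : ℕ → List ℕ := fun m =>
        if K < (Nat.unpair m).1 ∧ (Nat.unpair m).2 < c (Nat.unpair m).1 then
          List.ofFn ((L (Nat.unpair m).1).getD (Nat.unpair m).2 (fun _ => 0))
        else List.replicate ((Nat.unpair m).1 + (Nat.unpair m).2 + K + 1) 0 with hσ
      set g : ℕ → ℝ := fun m => (1/2 : ℝ)^((Nat.unpair m).1 + (Nat.unpair m).2 + K + 1)
        with hg
      have hlenσ : ∀ m, (Nat.unpair m).1 + (Nat.unpair m).2 + K + 1 ≤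
          2 * (σ m).length + c ((σ m).length) := by
        intro m
        simp only [hσ]
        by_cases hcond : K < (Nat.unpair m).1 ∧ (Nat.unpair m).2 < c (Nat.unpair m).1
        · rw [if_pos hcond]
          simp only [List.length_ofFn]
          omega
        · rw [if_neg hcond]
          simp only [List.length_replicate]
          omega
      have hbound : ∀ m, (1:ℝ) / ((2^(2*(σ m).length + c ((σ m).length)) : ℕ) : ℝ) ≤ g m := by
        intro m
        rw [hg]
        push_cast
        rw [one_div, ← inv_pow, inv_eq_one_div]
        exact pow_le_pow_of_le_one (by norm_num) (by norm_num) (hlenσ m)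
      set G : ℕ × ℕ → ℝ := fun p => (1/2 : ℝ)^(K+1) * ((1/2 : ℝ)^p.1 * (1/2 : ℝ)^p.2)
        with hG
      have hGsum : Summable G := by
        apply Summable.mul_left
        exact summable_geometric_two.mul_of_nonneg summable_geometric_two
          (fun n => by positivity) (fun n => by positivity)
      have hgG : ∀ m, g m = G (Nat.pairEquiv.symm m) := by
        intro m
        simp only [hg, hG]
        rw [show Nat.pairEquiv.symm m = Nat.unpair m from rfl]
        rw [← pow_add, ← pow_add]
        congr 1
        omega
      have hgsum : Summable g := by
        have := (Nat.pairEquiv.symm.summable_iff (f := G)).mpr hGsum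
        apply this.congr
        intro m
        exact (hgG m).symm
      have htsumg : ∑' m, g m = 4 * (1/2 : ℝ)^(K+1) := by
        have h1 : ∑' m, g m = ∑' p, G p := by
          rw [tsum_congr hgG]
          exact Nat.pairEquiv.symm.tsum_eq G
        rw [h1, hG]
        rw [tsum_mul_left]
        have h2 : ∑' (p : ℕ × ℕ), (1/2 : ℝ)^p.1 * (1/2 : ℝ)^p.2 =
            (∑' n : ℕ, (1/2 : ℝ)^n) * (∑' n : ℕ, (1/2 : ℝ)^n) := by
          rw [← tsum_mul_tsum_of_summable_norm]
          · simpa using summable_geometric_two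
          · simpa using summable_geometric_two
        rw [h2, tsum_geometric_two]
        ring
      refine ⟨σ, ?_, ?_, ?_⟩
      · exact Summable.of_nonneg_of_le (fun m => by positivity) hbound hgsum
      · calc (∑' m, (1:ℝ) / ((2^(2*(σ m).length + c ((σ m).length)) : ℕ) : ℝ))
            ≤ ∑' m, g m := Summable.tsum_le_tsum hbound
              (Summable.of_nonneg_of_le (fun m => by positivity) hbound hgsum) hgsum
          _ = 4 * (1/2 : ℝ)^(K+1) := htsumg
          _ = 2 * (1/2 : ℝ)^K := by ring
          _ < 2 * (ε/2) := by linarith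
          _ = ε := by ring
      · intro x hx
        have hfreq := hsub hx
        simp only [mem_setOf_eq] at hfreq
        rw [Filter.frequently_atTop] at hfreq
        obtain ⟨n, hnK, hmem⟩ := hfreq (K+1)
        have hmemL : (fun i : Fin n => x i) ∈ L n := by
          rw [hL]
          simp only [Finset.mem_toList, Set.Finite.mem_toFinset]
          exact hmem
        obtain ⟨⟨j, hj⟩, hget⟩ := List.mem_iff_get.mp hmemL
        have hjc : j < c n := by rw [← hLlen n]; exact hj
        rw [Set.mem_iUnion]
        refine ⟨Nat.pair n j, ?_⟩
        have hcond : K < (Nat.unpair (Nat.pair n j)).1 ∧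
            (Nat.unpair (Nat.pair n j)).2 < c (Nat.unpair (Nat.pair n j)).1 := by
          rw [Nat.unpair_pair]
          exact ⟨hnK, hjc⟩
        have hσm : σ (Nat.pair n j) = List.ofFn (fun i : Fin n => x i) := by
          simp only [hσ]
          rw [if_pos hcond, Nat.unpair_pair]
          congr 1
          rw [List.getD_eq_getElem (hn := hj)]
          exact hget
        rw [hσm]
        exact mem_cylinder_ofFn _ _ (fun i => rfl)
  · rintro ⟨h, hpos, _, hfN⟩
    exact aux_backward A h hpos hfN
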